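/- Let F be the free group on a, b and f_k ∈ Aut(F) with f_k(a) = a^k b a^{-k}, f_k(b) = a^{k-1} b a^{-k}. Then f_k^6 equals the inner automorphism of conjugation by x_k := a^k b^k (a^{-1}b)^{k-1} a^{-k} b^{-k} (ab^{-1})^{k-1}. -/
import Mathlib


abbrev F := FreeGroup (Fin 2)
noncomputable abbrev fa : F := FreeGroup.of 0
noncomputable abbrev fb : F := FreeGroup.of 1

/-- The element `x_k = aᵏ bᵏ (a⁻¹b)ᵏ⁻¹ a⁻ᵏ b⁻ᵏ (ab⁻¹)ᵏ⁻¹`. -/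
noncomputable def xElt (k : ℕ) : F :=
  fa ^ k * fb ^ k * (fa⁻¹ * fb) ^ (k - 1) * (fa ^ k)⁻¹ * (fb ^ k)⁻¹ * (fa * fb⁻¹) ^ (k - 1)

private lemma combine (p q : MulAut F) (d e : F) :
    (MulAut.conj d * p) * (MulAut.conj e * q) = MulAut.conj (d * p e) * (p * q) := by
  ext x
  simp [MulAut.conj_apply, map_mul, map_inv, mul_assoc]

private lemma word_id (m : ℕ) :
    fa^m * (fa*fb*fa⁻¹)^m * ((fa*fb*fa⁻¹*fa⁻¹)^m * (fa*fb*fa⁻¹*fb⁻¹*fa⁻¹)^m) *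
      ((fa*fb*fa⁻¹*fb⁻¹*fa*fb⁻¹*fa⁻¹)^m * (fa*fb*fa⁻¹*fb⁻¹*fa*fa*fb⁻¹*fa⁻¹)^m) *
      (fa*fb*fa⁻¹*fb⁻¹)
    = fa^(m+1) * fb^(m+1) * (fa⁻¹*fb)^m * (fa^(m+1))⁻¹ * (fb^(m+1))⁻¹ * (fa*fb⁻¹)^m := by
  have c1 : (fa*fb*fa⁻¹)^m = fa*fb^m*fa⁻¹ := conj_pow
  have c2 : (fa*fb*fa⁻¹*fa⁻¹)^m = (fa*fa)*(fa⁻¹*fb)^m*(fa*fa)⁻¹ := by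
    rw [show fa*fb*fa⁻¹*fa⁻¹ = (fa*fa)*(fa⁻¹*fb)*(fa*fa)⁻¹ by group, conj_pow]
  have c3 : (fa*fb*fa⁻¹*fb⁻¹*fa⁻¹)^m = (fa*fb)*(fa^m)⁻¹*(fa*fb)⁻¹ := by
    rw [show fa*fb*fa⁻¹*fb⁻¹*fa⁻¹ = (fa*fb)*fa⁻¹*(fa*fb)⁻¹ by group, conj_pow, inv_pow]
  have c4 : (fa*fb*fa⁻¹*fb⁻¹*fa*fb⁻¹*fa⁻¹)^m
      = (fa*fb)*(fa⁻¹*(fb^m)⁻¹*(fa⁻¹)⁻¹)*(fa*fb)⁻¹ := by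
    rw [show fa*fb*fa⁻¹*fb⁻¹*fa*fb⁻¹*fa⁻¹ = (fa*fb)*(fa⁻¹*fb⁻¹*(fa⁻¹)⁻¹)*(fa*fb)⁻¹ by group,
      conj_pow, conj_pow, inv_pow]
  have c5 : (fa*fb*fa⁻¹*fb⁻¹*fa*fa*fb⁻¹*fa⁻¹)^m
      = (fa*fb*fa⁻¹*fb⁻¹*fa)*((fa⁻¹*fb)^m)⁻¹*(fa*fb*fa⁻¹*fb⁻¹*fa)⁻¹ := by
    rw [show fa*fb*fa⁻¹*fb⁻¹*fa*fa*fb⁻¹*fa⁻¹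
        = (fa*fb*fa⁻¹*fb⁻¹*fa)*(fa⁻¹*fb)⁻¹*(fa*fb*fa⁻¹*fb⁻¹*fa)⁻¹ by group, conj_pow, inv_pow]
  have crhs : (fa*fb⁻¹)^m = fa*((fa⁻¹*fb)^m)⁻¹*fa⁻¹ := by
    rw [show fa*fb⁻¹ = fa*(fa⁻¹*fb)⁻¹*fa⁻¹ by group, conj_pow, inv_pow]
  have commA : fa * fa^m = fa^m * fa := (pow_succ' fa m).symm.trans (pow_succ fa m)
  have commB : fb * fb^m = fb^m * fb := (pow_succ' fb m).symm.trans (pow_succ fb m)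
  have commP : (fa⁻¹*fb)^m * (fa⁻¹*fb) = (fa⁻¹*fb) * (fa⁻¹*fb)^m :=
    ((Commute.refl (fa⁻¹*fb)).pow_left m).eq
  have hA' : ∀ X : F, (fa^m)⁻¹*(fa⁻¹*X) = fa⁻¹*((fa^m)⁻¹*X) := by
    intro X
    rw [← mul_assoc, ← mul_inv_rev, commA, mul_inv_rev, mul_assoc]
  have hB' : ∀ X : F, (fb^m)⁻¹*(fb⁻¹*X) = fb⁻¹*((fb^m)⁻¹*X) := by
    intro X
    rw [← mul_assoc, ← mul_inv_rev, commB, mul_inv_rev, mul_assoc]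
  have hP' : ∀ X : F, (fa⁻¹*fb)^m*(fa⁻¹*(fb*X)) = fa⁻¹*(fb*((fa⁻¹*fb)^m*X)) := by
    intro X
    rw [← mul_assoc, ← mul_assoc, mul_assoc ((fa⁻¹*fb)^m), commP, mul_assoc, mul_assoc,
      ← mul_assoc fa⁻¹]
  rw [c1, c2, c3, c4, c5, crhs, pow_succ fa m, pow_succ fb m]
  simp only [mul_assoc, mul_inv_rev, inv_inv, mul_inv_cancel_left, inv_mul_cancel_left,
    mul_inv_cancel, mul_one]
  rw [hP', hA', hB']
  simp only [mul_assoc, mul_inv_cancel_left, inv_mul_cancel_left, mul_inv_cancel, mul_one]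

theorem stmt5 (k : ℕ) (hk : 1 ≤ k) (f : MulAut F)
    (hfa : f fa = fa ^ k * fb * (fa ^ k)⁻¹)
    (hfb : f fb = fa ^ (k - 1) * fb * (fa ^ k)⁻¹) :
    f ^ 6 = MulAut.conj (xElt k) := by
  obtain ⟨m, rfl⟩ : ∃ m, k = m + 1 := ⟨k - 1, (Nat.succ_pred_eq_of_pos hk).symm⟩
  simp only [Nat.add_sub_cancel] at hfb
  set c : F := fa ^ m with hc
  set g : MulAut F := (MulAut.conj c)⁻¹ * f with hgdef
  have hfg : f = MulAut.conj c * g := (mul_inv_cancel_left _ _).symm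
  have hconjinv : (MulAut.conj c)⁻¹ = MulAut.conj c⁻¹ := (map_inv MulAut.conj c).symm
  have hga : g fa = fa*fb*fa⁻¹ := by
    show (MulAut.conj c)⁻¹ (f fa) = _
    rw [hfa, hconjinv, MulAut.conj_apply, hc]
    group
  have hgb : g fb = fb*fa⁻¹ := by
    show (MulAut.conj c)⁻¹ (f fb) = _
    rw [hfb, hconjinv, MulAut.conj_apply, hc]
    group
  have h2a : g (fa*fb*fa⁻¹) = fa*fb*fa⁻¹*fa⁻¹ := by
    simp only [map_mul, map_inv, hga, hgb]; group
  have h2b : g (fb*fa⁻¹) = fa⁻¹ := by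
    simp only [map_mul, map_inv, hga, hgb]; group
  have h3a : g (fa*fb*fa⁻¹*fa⁻¹) = fa*fb*fa⁻¹*fb⁻¹*fa⁻¹ := by
    simp only [map_mul, map_inv, hga, hgb]; group
  have h3b : g (fa⁻¹ : F) = fa*fb⁻¹*fa⁻¹ := by
    simp only [map_inv, hga]; group
  have h4a : g (fa*fb*fa⁻¹*fb⁻¹*fa⁻¹) = fa*fb*fa⁻¹*fb⁻¹*fa*fb⁻¹*fa⁻¹ := by
    simp only [map_mul, map_inv, hga, hgb]; group
  have h4b : g (fa*fb⁻¹*fa⁻¹) = fa*fa*fb⁻¹*fa⁻¹ := by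
    simp only [map_mul, map_inv, hga, hgb]; group
  have h5a : g (fa*fb*fa⁻¹*fb⁻¹*fa*fb⁻¹*fa⁻¹) = fa*fb*fa⁻¹*fb⁻¹*fa*fa*fb⁻¹*fa⁻¹ := by
    simp only [map_mul, map_inv, hga, hgb]; group
  have h5b : g (fa*fa*fb⁻¹*fa⁻¹) = fa*fb*fa*fb⁻¹*fa⁻¹ := by
    simp only [map_mul, map_inv, hga, hgb]; group
  have h6a : g (fa*fb*fa⁻¹*fb⁻¹*fa*fa*fb⁻¹*fa⁻¹)
      = (fa*fb*fa⁻¹*fb⁻¹)*fa*(fa*fb*fa⁻¹*fb⁻¹)⁻¹ := by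
    simp only [map_mul, map_inv, hga, hgb]; group
  have h6b : g (fa*fb*fa*fb⁻¹*fa⁻¹) = (fa*fb*fa⁻¹*fb⁻¹)*fb*(fa*fb*fa⁻¹*fb⁻¹)⁻¹ := by
    simp only [map_mul, map_inv, hga, hgb]; group
  have hpow6 : ∀ x : F, (g^6) x = g (g (g (g (g (g x))))) := fun x => rfl
  have hg6 : g^6 = MulAut.conj (fa*fb*fa⁻¹*fb⁻¹) := by
    apply MulEquiv.toMonoidHom_injective
    apply FreeGroup.ext_hom
    intro i
    fin_cases i
    · show (g^6) fa = MulAut.conj (fa*fb*fa⁻¹*fb⁻¹) fa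
      rw [hpow6, hga, h2a, h3a, h4a, h5a, h6a, MulAut.conj_apply]
    · show (g^6) fb = MulAut.conj (fa*fb*fa⁻¹*fb⁻¹) fb
      rw [hpow6, hgb, h2b, h3b, h4b, h5b, h6b, MulAut.conj_apply]
  have hgc : g c = (fa*fb*fa⁻¹)^m := by rw [hc, map_pow, hga]
  have hy1 : (g*g) (c * g c) = (fa*fb*fa⁻¹*fa⁻¹)^m * (fa*fb*fa⁻¹*fb⁻¹*fa⁻¹)^m := by
    rw [hgc, hc, map_mul, map_pow, map_pow]
    rw [show (g*g) fa = g (g fa) from rfl, show (g*g) (fa*fb*fa⁻¹) = g (g (fa*fb*fa⁻¹)) from rfl,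
      hga, h2a, h3a]
  have hy2 : (g*g) ((g*g) (c * g c))
      = (fa*fb*fa⁻¹*fb⁻¹*fa*fb⁻¹*fa⁻¹)^m * (fa*fb*fa⁻¹*fb⁻¹*fa*fa*fb⁻¹*fa⁻¹)^m := by
    rw [hy1, map_mul, map_pow, map_pow]
    rw [show (g*g) (fa*fb*fa⁻¹*fa⁻¹) = g (g (fa*fb*fa⁻¹*fa⁻¹)) from rfl,
      show (g*g) (fa*fb*fa⁻¹*fb⁻¹*fa⁻¹) = g (g (fa*fb*fa⁻¹*fb⁻¹*fa⁻¹)) from rfl,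
      h3a, h4a, h5a]
  have e2 : f^2 = MulAut.conj (c * g c) * (g*g) := by
    rw [pow_two, hfg, combine]
  have e6 : f^6 = MulAut.conj ((c * g c) * (g*g) (c * g c) * ((g*g)*(g*g)) (c * g c))
      * (((g*g)*(g*g))*(g*g)) := by
    rw [show (6:ℕ) = 2*3 from rfl, pow_mul, e2, pow_succ, pow_succ, pow_one, combine, combine]
  have hgg : ((g*g)*(g*g)) (c * g c) = (g*g) ((g*g) (c * g c)) := rfl
  rw [e6, hgg, hy2, hy1, hgc, show ((g*g)*(g*g))*(g*g) = g^6 by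
      rw [show (6:ℕ) = 2+2+2 from rfl, pow_add, pow_add, pow_two], hg6, hc, ← map_mul]
  congr 1
  rw [show xElt (m+1) = fa^(m+1) * fb^(m+1) * (fa⁻¹*fb)^m * (fa^(m+1))⁻¹ * (fb^(m+1))⁻¹
      * (fa*fb⁻¹)^m by simp [xElt]]
  exact word_id m
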